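/- Let D ≥ 1, n ≥ 0 be integers and i an integer. Then for each k in {0,...,n}, the rational number (-1)^{n+k} · (∏_{j=k+1}^{n+k} (D·j − i)) / (n!/gcd(D^n, n!)) · C(n,k) · D^n/gcd(D^n, n!) is an integer, and D^{2n} · ∏_{j=1}^n (t − j + i/D) / ∏_{j=0}^n (t+j) = ∑_{k=0}^n [that integer] / (t+k) as rational functions in t. -/

import Mathlib

open Finset

lemma aux_asc (m : ℕ) : ∀ n : ℕ, m.ascFactorial n = ∏ j ∈ Finset.range n, (m + j)
  | 0 => by simp
  | n + 1 => by rw [Nat.ascFactorial_succ, Finset.prod_range_succ, aux_asc m n, mul_comm]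

lemma fact_dvd_prod_consec (n : ℕ) (x : ℤ) :
    (n.factorial : ℤ) ∣ ∏ j ∈ Finset.range n, (x + j) := by
  rcases le_or_gt 0 x with hx | hx
  · lift x to ℕ using hx
    have h : ∏ j ∈ range n, ((x : ℤ) + j) = ((x.ascFactorial n : ℕ) : ℤ) := by
      rw [aux_asc]; push_cast; ring
    rw [h]
    exact_mod_cast Nat.factorial_dvd_ascFactorial x n
  · set m := (-x).toNat with hm
    have hxm : x = -(m : ℤ) := by
      rw [hm, Int.toNat_of_nonneg (by omega)]; ring
    rcases lt_or_ge m n with h | h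
    · have hz : ∏ j ∈ range n, (x + j) = 0 :=
        Finset.prod_eq_zero (Finset.mem_range.mpr h) (by rw [hxm]; ring)
      simp [hz]
    · have h1 : ∀ j ∈ range n, x + j = (-1) * ((m - j : ℕ) : ℤ) := by
        intro j hj
        have hj' : j < n := Finset.mem_range.mp hj
        rw [hxm, Nat.cast_sub (by omega)]; ring
      rw [Finset.prod_congr rfl h1, Finset.prod_mul_distrib, Finset.prod_const]
      have h2 : ∏ j ∈ range n, ((m - j : ℕ) : ℤ) = (((m - n + 1).ascFactorial n : ℕ) : ℤ) := by
        rw [← Nat.cast_prod]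
        congr 1
        rw [← Finset.prod_range_reflect (fun j => m - j) n, aux_asc]
        refine Finset.prod_congr rfl fun j hj => ?_
        have := Finset.mem_range.mp hj
        omega
      rw [h2]
      exact Dvd.dvd.mul_left (by exact_mod_cast Nat.factorial_dvd_ascFactorial _ n) _

lemma key_dvd (D n : ℕ) (hD : 1 ≤ D) (i : ℤ) (k : ℕ) :
    (n.factorial : ℤ) ∣ (D : ℤ) ^ n * ∏ j ∈ Finset.Icc (k + 1) (n + k), ((D : ℤ) * j - i) := by
  rcases Nat.eq_zero_or_pos n with rfl | hn
  · simp
  set g := Nat.gcd (D ^ n) n.factorial with hg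
  have hgd : g ∣ D ^ n := Nat.gcd_dvd_left _ _
  have hgf : g ∣ n.factorial := Nat.gcd_dvd_right _ _
  have hgpos : 0 < g := Nat.gcd_pos_of_pos_right _ (Nat.factorial_pos n)
  set M := n.factorial / g with hM
  have hMg : g * M = n.factorial := Nat.mul_div_cancel' hgf
  have hMdvdfact : M ∣ n.factorial := Nat.div_dvd_of_dvd hgf
  have hMpos : 0 < M :=
    Nat.div_pos (Nat.le_of_dvd (Nat.factorial_pos n) hgf) hgpos
  have hD0 : D ≠ 0 := by omega
  have hcop : Nat.Coprime D M := by
    by_contra hcon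
    obtain ⟨p, hp, hpd⟩ := Nat.exists_prime_and_dvd hcon
    have hpD : p ∣ D := hpd.trans (Nat.gcd_dvd_left _ _)
    have hpM : p ∣ M := hpd.trans (Nat.gcd_dvd_right _ _)
    have hDn0 : D ^ n ≠ 0 := pow_ne_zero _ hD0
    have hf0 : n.factorial ≠ 0 := Nat.factorial_ne_zero n
    have hM0 : M ≠ 0 := hMpos.ne'
    have hg0 : g ≠ 0 := hgpos.ne'
    have h1 : (n.factorial).factorization p = g.factorization p + M.factorization p := by
      rw [← hMg, Nat.factorization_mul hg0 hM0]; simp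
    have h2 : g.factorization p = min ((D ^ n).factorization p) ((n.factorial).factorization p) := by
      rw [hg, Nat.factorization_gcd hDn0 hf0]; simp
    have h3 : 0 < M.factorization p := hp.factorization_pos_of_dvd hM0 hpM
    have h4 : n ≤ (D ^ n).factorization p := by
      rw [Nat.factorization_pow]
      have h5 : 0 < D.factorization p := hp.factorization_pos_of_dvd hD0 hpD
      have : n * 1 ≤ n * D.factorization p := Nat.mul_le_mul_left n h5
      simpa using this
    have h5 : (n.factorial).factorization p ≤ n := by
      haveI : Fact p.Prime := ⟨hp⟩
      rw [Nat.factorization_def _ hp]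
      have hle := Nat.Prime.emultiplicity_factorial_le_div_pred hp n
      rw [← padicValNat_eq_emultiplicity (Nat.factorial_ne_zero n)] at hle
      have : padicValNat p n.factorial ≤ n / (p - 1) := by exact_mod_cast hle
      exact this.trans (Nat.div_le_self _ _)
    omega
  have hMP : (M : ℤ) ∣ ∏ j ∈ Finset.Icc (k + 1) (n + k), ((D : ℤ) * j - i) := by
    haveI : NeZero M := ⟨hMpos.ne'⟩
    set u : (ZMod M)ˣ := ZMod.unitOfCoprime D hcop with hu
    have hucast : (u : ZMod M) = (D : ZMod M) := ZMod.coe_unitOfCoprime _ _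
    set e : ℤ := (((u⁻¹ : (ZMod M)ˣ) : ZMod M).val : ℤ) with he
    have heu : ((e : ℤ) : ZMod M) = ((u⁻¹ : (ZMod M)ˣ) : ZMod M) := by
      rw [he, Int.cast_natCast, ZMod.natCast_val, ZMod.cast_id]
    rw [← ZMod.intCast_zmod_eq_zero_iff_dvd]
    push_cast
    have hfac : ∀ j : ℕ, ((D : ZMod M) * (j : ZMod M) - (i : ZMod M))
        = (u : ZMod M) * ((j : ZMod M) - (e : ZMod M) * (i : ZMod M)) := by
      intro j
      have hui : (D : ZMod M) * ((u⁻¹ : (ZMod M)ˣ) : ZMod M) = 1 := by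
        rw [← hucast]; exact_mod_cast u.mul_inv
      rw [heu, hucast, mul_sub, ← mul_assoc, hui, one_mul]
    rw [Finset.prod_congr rfl (fun j _ => hfac j), Finset.prod_mul_distrib, Finset.prod_const]
    have hz : ∏ j ∈ Finset.Icc (k + 1) (n + k), ((j : ZMod M) - (e : ZMod M) * (i : ZMod M)) = 0 := by
      have hdvdZ : (n.factorial : ℤ) ∣ ∏ j ∈ Finset.Icc (k + 1) (n + k), ((j : ℤ) - e * i) := by
        rw [← Finset.Ico_add_one_right_eq_Icc, Finset.prod_Ico_eq_prod_range]
        have hcard : n + k + 1 - (k + 1) = n := by omega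
        rw [hcard]
        have hre : ∀ j ∈ Finset.range n, (((k + 1 + j : ℕ) : ℤ) - e * i)
            = (((k + 1 : ℤ) - e * i) + (j : ℕ)) := by
          intro j _; push_cast; ring
        rw [Finset.prod_congr rfl hre]
        exact fact_dvd_prod_consec n _
      have hdvdM : (M : ℤ) ∣ ∏ j ∈ Finset.Icc (k + 1) (n + k), ((j : ℤ) - e * i) :=
        dvd_trans (by exact_mod_cast hMdvdfact) hdvdZ
      have := (ZMod.intCast_zmod_eq_zero_iff_dvd _ M).mpr hdvdM
      push_cast at this
      exact this
    rw [hz, mul_zero]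
  have hfinal : ((g : ℤ) * (M : ℤ)) ∣ (D : ℤ) ^ n * ∏ j ∈ Finset.Icc (k + 1) (n + k), ((D : ℤ) * j - i) :=
    mul_dvd_mul (by exact_mod_cast hgd) hMP
  have : ((n.factorial : ℕ) : ℤ) = (g : ℤ) * (M : ℤ) := by exact_mod_cast hMg.symm
  rw [this]
  exact hfinal

lemma prod_erase_eq (n k : ℕ) (hk : k ≤ n) :
    ∏ j ∈ (Finset.range (n+1)).erase k, ((j : ℚ) - k)
      = (-1)^k * k.factorial * (n - k).factorial := by
  have hsplit : (Finset.range (n+1)).erase k = Finset.range k ∪ Finset.Ico (k+1) (n+1) := by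
    ext j
    simp only [Finset.mem_erase, Finset.mem_range, Finset.mem_union, Finset.mem_Ico]
    omega
  have hdisj : Disjoint (Finset.range k) (Finset.Ico (k+1) (n+1)) := by
    simp only [Finset.disjoint_left, Finset.mem_range, Finset.mem_Ico]
    omega
  rw [hsplit, Finset.prod_union hdisj]
  have h1 : ∏ j ∈ Finset.range k, ((j : ℚ) - k) = (-1)^k * k.factorial := by
    rw [← Finset.prod_range_reflect (fun j => (j : ℚ) - k) k]
    have hcg : ∀ j ∈ Finset.range k, (((k - 1 - j : ℕ) : ℚ) - k) = (-1) * ((j : ℚ) + 1) := by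
      intro j hj
      have hj' := Finset.mem_range.mp hj
      rw [Nat.cast_sub (by omega), Nat.cast_sub (by omega)]
      push_cast
      ring
    rw [Finset.prod_congr rfl hcg, Finset.prod_mul_distrib, Finset.prod_const,
      Finset.card_range]
    have hfk : ∏ x ∈ Finset.range k, ((x : ℚ) + 1) = k.factorial := by
      exact_mod_cast Finset.prod_range_add_one_eq_factorial k
    rw [hfk]
  have h2 : ∏ j ∈ Finset.Ico (k+1) (n+1), ((j : ℚ) - k) = (n - k).factorial := by
    rw [Finset.prod_Ico_eq_prod_range]
    have hc' : n + 1 - (k + 1) = n - k := by omega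
    rw [hc']
    have hcg : ∀ j ∈ Finset.range (n - k), (((k + 1 + j : ℕ) : ℚ) - k) = ((j : ℚ) + 1) := by
      intro j _
      push_cast
      ring
    rw [Finset.prod_congr rfl hcg]
    exact_mod_cast Finset.prod_range_add_one_eq_factorial (n - k)
  rw [h1, h2]

lemma prodN_eq (D n k : ℕ) (hD : 1 ≤ D) (i : ℤ) :
    (D : ℚ)^(2*n) * ∏ j ∈ Finset.Icc 1 n, (-(k:ℚ) - ((j:ℚ) - (i:ℚ)/D))
      = (-1)^n * (D:ℚ)^n * ∏ j ∈ Finset.Icc (k+1) (n+k), ((D:ℚ)*j - i) := by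
  have hD0 : (D : ℚ) ≠ 0 := Nat.cast_ne_zero.mpr (by omega)
  rw [← Finset.Ico_add_one_right_eq_Icc, Finset.prod_Ico_eq_prod_range,
      ← Finset.Ico_add_one_right_eq_Icc (k+1), Finset.prod_Ico_eq_prod_range]
  have e1 : n + 1 - 1 = n := by omega
  have e2 : n + k + 1 - (k + 1) = n := by omega
  rw [e1, e2]
  have lhs : (D : ℚ)^(2*n) * ∏ j ∈ Finset.range n, (-(k:ℚ) - (((1 + j : ℕ):ℚ) - (i:ℚ)/D))
      = ∏ j ∈ Finset.range n, ((D:ℚ)^2 * (-(k:ℚ) - (((1 + j : ℕ):ℚ) - (i:ℚ)/D))) := by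
    rw [Finset.prod_mul_distrib, Finset.prod_const, Finset.card_range, ← pow_mul]
  have rhs : (-1:ℚ)^n * (D:ℚ)^n * ∏ j ∈ Finset.range n, ((D:ℚ)*((k+1+j : ℕ):ℚ) - i)
      = ∏ j ∈ Finset.range n, ((-(D:ℚ)) * ((D:ℚ)*((k+1+j : ℕ):ℚ) - i)) := by
    rw [Finset.prod_mul_distrib, Finset.prod_const, Finset.card_range, neg_pow (D:ℚ) n, mul_assoc]
  rw [lhs, rhs]
  refine Finset.prod_congr rfl fun j _ => ?_
  push_cast
  field_simp
  ring

lemma degree_prod_le_card {s : Finset ℕ} (f : ℕ → Polynomial ℚ)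
    (h : ∀ j ∈ s, (f j).degree ≤ 1) :
    (∏ j ∈ s, f j).degree ≤ (s.card : WithBot ℕ) := by
  refine (Polynomial.degree_prod_le _ _).trans ?_
  calc ∑ j ∈ s, (f j).degree ≤ ∑ _j ∈ s, (1 : WithBot ℕ) := Finset.sum_le_sum h
    _ = (s.card : WithBot ℕ) := by
        rw [Finset.sum_const, nsmul_eq_mul, mul_one]

open Polynomial in
theorem stmt8 (D n : ℕ) (hD : 1 ≤ D) (i : ℤ) (c : ℕ → ℚ)
    (hc : ∀ k, c k = (-1) ^ (n + k) *
        (∏ j ∈ Finset.Icc (k + 1) (n + k), ((D : ℚ) * j - i)) /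
          ((n.factorial : ℚ) / (Nat.gcd (D ^ n) n.factorial : ℚ)) *
        (n.choose k : ℚ) * ((D : ℚ) ^ n / (Nat.gcd (D ^ n) n.factorial : ℚ))) :
    (∀ k ≤ n, ∃ z : ℤ, c k = z) ∧
      ∀ t : ℚ, (∀ j ≤ n, t + (j : ℚ) ≠ 0) →
        (D : ℚ) ^ (2 * n) * (∏ j ∈ Finset.Icc 1 n, (t - j + i / D)) /
            ∏ j ∈ Finset.range (n + 1), (t + j) =
          ∑ k ∈ Finset.range (n + 1), c k / (t + k) := by
  have hD0 : (D : ℚ) ≠ 0 := Nat.cast_ne_zero.mpr (by omega)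
  have hg0 : ((Nat.gcd (D ^ n) n.factorial : ℕ) : ℚ) ≠ 0 :=
    Nat.cast_ne_zero.mpr (Nat.gcd_pos_of_pos_right _ (Nat.factorial_pos n)).ne'
  have hf0 : ((n.factorial : ℕ) : ℚ) ≠ 0 := Nat.cast_ne_zero.mpr (Nat.factorial_ne_zero n)
  set P : ℕ → ℤ := fun k => ∏ j ∈ Finset.Icc (k + 1) (n + k), ((D : ℤ) * j - i) with hP
  have hPq : ∀ k, ((P k : ℤ) : ℚ) = ∏ j ∈ Finset.Icc (k + 1) (n + k), ((D : ℚ) * j - i) := by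
    intro k
    rw [hP]
    push_cast
    rfl
  have hc' : ∀ k, c k = (-1) ^ (n + k) * (n.choose k : ℚ) *
      (((D : ℚ) ^ n * ((P k : ℤ) : ℚ)) / (n.factorial : ℚ)) := by
    intro k
    rw [hc k, hPq k]
    field_simp
  constructor
  · intro k hk
    refine ⟨(-1) ^ (n + k) * (n.choose k : ℤ) * (((D : ℤ) ^ n * P k) / (n.factorial : ℤ)), ?_⟩
    rw [hc' k, Int.cast_mul, Int.cast_mul, Int.cast_div_charZero (key_dvd D n hD i k)]
    simp only [Int.cast_mul, Int.cast_pow, Int.cast_neg, Int.cast_one, Int.cast_natCast]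
    rfl
  · intro t ht
    classical
    set Np : Polynomial ℚ :=
      Polynomial.C ((D : ℚ) ^ (2 * n)) *
        ∏ j ∈ Finset.Icc 1 n, (X - Polynomial.C ((j : ℚ) - (i : ℚ) / D)) with hNp
    set Gp : Polynomial ℚ :=
      ∑ k ∈ Finset.range (n + 1),
        Polynomial.C (c k) * ∏ j ∈ (Finset.range (n + 1)).erase k, (X + Polynomial.C (j : ℚ))
      with hGp
    have hcard : #(Finset.range (n + 1)) = n + 1 := Finset.card_range _
    -- degree bounds
    have hdegN : Np.degree < (#(Finset.range (n + 1)) : ℕ) := by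
      rw [hcard]
      have h1 : (∏ j ∈ Finset.Icc 1 n, (X - Polynomial.C ((j : ℚ) - (i : ℚ) / D))).degree
          ≤ (n : WithBot ℕ) := by
        have := degree_prod_le_card (fun j => X - Polynomial.C ((j : ℚ) - (i : ℚ) / D))
          (fun j _ => (Polynomial.degree_X_sub_C _).le) (s := Finset.Icc 1 n)
        simpa [Nat.card_Icc] using this
      calc Np.degree ≤ _ := Polynomial.degree_mul_le _ _
        _ ≤ 0 + (n : WithBot ℕ) := add_le_add Polynomial.degree_C_le h1
        _ < ((n + 1 : ℕ) : WithBot ℕ) := by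
            rw [zero_add]
            exact_mod_cast Nat.lt_succ_self n
    have hdegG : Gp.degree < (#(Finset.range (n + 1)) : ℕ) := by
      rw [hcard]
      refine (Polynomial.degree_sum_le _ _).trans_lt ?_
      rw [Finset.sup_lt_iff (by exact_mod_cast WithBot.bot_lt_coe (n+1))]
      intro k hk
      have h1 : (∏ j ∈ (Finset.range (n + 1)).erase k, (X + Polynomial.C (j : ℚ))).degree
          ≤ (n : WithBot ℕ) := by
        have := degree_prod_le_card (fun j => X + Polynomial.C (j : ℚ))
          (fun j _ => (Polynomial.degree_X_add_C _).le) (s := (Finset.range (n + 1)).erase k)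
        simpa [Finset.card_erase_of_mem hk, hcard] using this
      calc (Polynomial.C (c k) * ∏ j ∈ (Finset.range (n + 1)).erase k,
              (X + Polynomial.C (j : ℚ))).degree
          ≤ _ := Polynomial.degree_mul_le _ _
        _ ≤ 0 + (n : WithBot ℕ) := add_le_add Polynomial.degree_C_le h1
        _ < ((n + 1 : ℕ) : WithBot ℕ) := by
            rw [zero_add]
            exact_mod_cast Nat.lt_succ_self n
    have hvs : Set.InjOn (fun k : ℕ => -(k : ℚ)) (Finset.range (n + 1)) := by
      intro a _ b _ hab
      simp only [neg_inj, Nat.cast_inj] at hab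
      exact hab
    have heval : ∀ k ∈ Finset.range (n + 1),
        Np.eval (-(k : ℚ)) = Gp.eval (-(k : ℚ)) := by
      intro k hk
      have hk' : k ≤ n := Nat.lt_succ_iff.mp (Finset.mem_range.mp hk)
      have hGev : Gp.eval (-(k : ℚ)) = c k * ((-1) ^ k * k.factorial * (n - k).factorial) := by
        rw [hGp, Polynomial.eval_finset_sum]
        rw [Finset.sum_eq_single k]
        · rw [Polynomial.eval_mul, Polynomial.eval_C, Polynomial.eval_prod]
          congr 1
          rw [← prod_erase_eq n k hk']
          refine Finset.prod_congr rfl fun j _ => ?_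
          simp [Polynomial.eval_add]
          ring
        · intro l hl hlk
          rw [Polynomial.eval_mul, Polynomial.eval_prod]
          have hkin : k ∈ (Finset.range (n + 1)).erase l :=
            Finset.mem_erase.mpr ⟨Ne.symm hlk, hk⟩
          have hz : ∏ j ∈ (Finset.range (n + 1)).erase l,
              (X + Polynomial.C (j : ℚ)).eval (-(k : ℚ)) = 0 :=
            Finset.prod_eq_zero hkin (by simp)
          rw [hz, mul_zero]
        · intro h
          exact absurd hk h
      have hNev : Np.eval (-(k : ℚ))
          = (-1) ^ n * (D : ℚ) ^ n * ((P k : ℤ) : ℚ) := by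
        rw [hNp, Polynomial.eval_mul, Polynomial.eval_C, Polynomial.eval_prod]
        have : ∀ j ∈ Finset.Icc 1 n, (X - Polynomial.C ((j : ℚ) - (i : ℚ) / D)).eval (-(k:ℚ))
            = (-(k:ℚ) - ((j:ℚ) - (i:ℚ)/D)) := by
          intro j _
          simp
        rw [Finset.prod_congr rfl this, prodN_eq D n k hD i, hPq]
      rw [hGev, hNev, hc' k]
      have hch : (n.choose k : ℚ) * (k.factorial : ℚ) * ((n - k).factorial : ℚ)
          = (n.factorial : ℚ) := by
        exact_mod_cast congrArg (Nat.cast : ℕ → ℚ)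
          (Nat.choose_mul_factorial_mul_factorial hk')
      have hsign : ((-1 : ℚ)) ^ (n + k) * (-1) ^ k = (-1) ^ n := by
        rw [pow_add, mul_assoc, ← pow_add, ← two_mul, pow_mul]
        norm_num
      field_simp
      rw [← hch, ← hsign]
      ring
    have hNG : Np = Gp :=
      Polynomial.eq_of_degrees_lt_of_eval_index_eq (v := fun k : ℕ => -(k : ℚ))
        (Finset.range (n + 1)) hvs hdegN hdegG heval
    have hNt : Np.eval t = (D : ℚ) ^ (2 * n) * ∏ j ∈ Finset.Icc 1 n, (t - j + i / D) := by
      rw [hNp, Polynomial.eval_mul, Polynomial.eval_C, Polynomial.eval_prod]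
      congr 1
      refine Finset.prod_congr rfl fun j _ => ?_
      simp
      ring
    have hGt : Gp.eval t = ∑ k ∈ Finset.range (n + 1),
        c k * ∏ j ∈ (Finset.range (n + 1)).erase k, (t + j) := by
      rw [hGp, Polynomial.eval_finset_sum]
      refine Finset.sum_congr rfl fun k _ => ?_
      rw [Polynomial.eval_mul, Polynomial.eval_C, Polynomial.eval_prod]
      congr 1
      refine Finset.prod_congr rfl fun j _ => ?_
      simp
    rw [← hNt, hNG, hGt, Finset.sum_div]
    refine Finset.sum_congr rfl fun k hk => ?_
    have hsplit : ∏ j ∈ Finset.range (n + 1), (t + (j:ℚ))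
        = (t + k) * ∏ j ∈ (Finset.range (n + 1)).erase k, (t + j) :=
      (Finset.mul_prod_erase _ _ hk).symm
    have hAne : ∏ j ∈ (Finset.range (n + 1)).erase k, (t + (j:ℚ)) ≠ 0 := by
      rw [Finset.prod_ne_zero_iff]
      intro j hj
      exact ht j (Nat.lt_succ_iff.mp (Finset.mem_range.mp (Finset.mem_of_mem_erase hj)))
    rw [hsplit, mul_div_mul_right _ _ hAne]
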